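/- Let (X, d_X) and (Y, d_Y) be metric spaces, and let f, F : X → Y be the two endpoints of a Lipschitz homotopy h : X × [0,1] → Y with Lipschitz constant C_h (for the product metric), i.e. h(x,0) = f(x) and h(x,1) = F(x) for all x. Then: (i) for every t ∈ [0,1] and every subset A ⊆ Y, {x ∈ X : h(x,t) ∈ A} ⊆ f⁻¹({y ∈ Y : dist(y,A) ≤ C_h·t}); (ii) if moreover there is a nondecreasing function α : [0,∞] → [0,∞] with diam(f⁻¹(B)) ≤ α(diam(B)) for every B ⊆ Y, then diam(F⁻¹(A)) ≤ α(diam(A) + 2·C_h) for every A ⊆ Y. In particular, if f is uniformly proper then so is F. -/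

import Mathlib

open MeasureTheory Metric

/-- For a Lipschitz homotopy `h` (constant `C_h`, sum metric on `X × [0,1]`)
between `f = h(·,0)` and `F = h(·,1)`:
(i) for `t ∈ [0,1]` and `A ⊆ Y`, `{x | h(x,t) ∈ A} ⊆ f⁻¹ {y | dist(y,A) ≤ C_h t}`;
(ii) if `α` is nondecreasing and `diam (f⁻¹ B) ≤ α (diam B)` for all `B`, then
`diam (F⁻¹ A) ≤ α (diam A + 2 C_h)` for all `A`. In particular, if `f` is uniformly proper
then so is `F`. -/
theorem lipschitz_homotopic_uniformly_proper
    {X Y : Type*} [MetricSpace X] [MetricSpace Y]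
    (f F : X → Y) (h : X → ℝ → Y) (Ch : NNReal)
    (hLip : ∀ x x' : X, ∀ s s' : ℝ, s ∈ Set.Icc (0:ℝ) 1 → s' ∈ Set.Icc (0:ℝ) 1 →
      dist (h x s) (h x' s') ≤ Ch * (dist x x' + |s - s'|))
    (h0 : ∀ x, h x 0 = f x) (h1 : ∀ x, h x 1 = F x) :
    (∀ t ∈ Set.Icc (0:ℝ) 1, ∀ A : Set Y,
      {x : X | h x t ∈ A} ⊆
        f ⁻¹' {y : Y | EMetric.infEdist y A ≤ (Ch : ENNReal) * ENNReal.ofReal t})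
    ∧ (∀ α : ENNReal → ENNReal, Monotone α →
        (∀ B : Set Y, EMetric.diam (f ⁻¹' B) ≤ α (EMetric.diam B)) →
        ∀ A : Set Y, EMetric.diam (F ⁻¹' A) ≤ α (EMetric.diam A + 2 * (Ch : ENNReal))) := by
  have key : ∀ t ∈ Set.Icc (0:ℝ) 1, ∀ A : Set Y,
      {x : X | h x t ∈ A} ⊆
        f ⁻¹' {y : Y | EMetric.infEdist y A ≤ (Ch : ENNReal) * ENNReal.ofReal t} := by
    intro t ht A x hx
    simp only [Set.mem_preimage, Set.mem_setOf_eq]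
    have h01 : (0:ℝ) ∈ Set.Icc (0:ℝ) 1 := by constructor <;> norm_num
    have hd : dist (f x) (h x t) ≤ Ch * t := by
      have := hLip x x 0 t h01 ht
      rw [h0] at this
      simpa [abs_of_nonneg ht.1] using this
    calc EMetric.infEdist (f x) A ≤ edist (f x) (h x t) :=
          EMetric.infEdist_le_edist_of_mem hx
      _ ≤ ENNReal.ofReal (Ch * t) := by
          rw [edist_dist]; exact ENNReal.ofReal_le_ofReal hd
      _ = (Ch : ENNReal) * ENNReal.ofReal t := by
          rw [ENNReal.ofReal_mul Ch.coe_nonneg, ENNReal.ofReal_coe_nnreal]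
  refine ⟨key, ?_⟩
  intro α hα hf A
  set B : Set Y := {y : Y | EMetric.infEdist y A ≤ (Ch : ENNReal)} with hB
  have hsub : F ⁻¹' A ⊆ f ⁻¹' B := by
    intro x hx
    have : x ∈ {x : X | h x 1 ∈ A} := by
      simp only [Set.mem_setOf_eq, h1]; exact hx
    have := key 1 (by constructor <;> norm_num) A this
    simpa [hB] using this
  have hdiamB : EMetric.diam B ≤ EMetric.diam A + 2 * (Ch : ENNReal) := by
    apply EMetric.diam_le
    intro y hy y' hy'
    have hy : EMetric.infEdist y A ≤ (Ch : ENNReal) := hy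
    have hy' : EMetric.infEdist y' A ≤ (Ch : ENNReal) := hy'
    refine ENNReal.le_of_forall_pos_le_add fun ε hε _ => ?_
    have hlt : EMetric.infEdist y' A < (Ch : ENNReal) + ε :=
      lt_of_le_of_lt hy' (ENNReal.lt_add_right ENNReal.coe_ne_top
        (by exact_mod_cast hε.ne'))
    obtain ⟨a, ha, hya⟩ := EMetric.infEdist_lt_iff.mp hlt
    calc edist y y' ≤ edist y a + edist a y' := edist_triangle _ _ _
      _ ≤ (EMetric.infEdist y A + EMetric.diam A) + ((Ch : ENNReal) + ε) := by
          refine add_le_add (EMetric.edist_le_infEdist_add_ediam ha) ?_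
          rw [edist_comm]; exact hya.le
      _ ≤ ((Ch : ENNReal) + EMetric.diam A) + ((Ch : ENNReal) + ε) := by
          gcongr
      _ = EMetric.diam A + 2 * (Ch : ENNReal) + ε := by ring
  calc EMetric.diam (F ⁻¹' A) ≤ EMetric.diam (f ⁻¹' B) :=
        EMetric.diam_mono hsub
    _ ≤ α (EMetric.diam B) := hf B
    _ ≤ α (EMetric.diam A + 2 * (Ch : ENNReal)) := hα hdiamB
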